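/- arXiv:1902.07513 — 2 statements merged into one kernel-verified Lean document; each statement's English description precedes it below -/
import Mathlib

section
/- Let ρ^(A):[0,∞)×ℝ→ℝ be defined by: for 0 ≤ t ≤ 1/2, ρ^(A)(t,x) = (x+2)/(2t+1) if x ∈ [−2, 2t−1], ρ^(A)(t,x) = 1 if x ∈ (2t−1, 0), ρ^(A)(t,x) = −1 if x ∈ (0, 1−2t), ρ^(A)(t,x) = (x−2)/(2t+1) if x ∈ [1−2t, 2], and 0 otherwise; for t > 1/2, ρ^(A)(t,x) = (x+2)/(2t+1) if x ∈ [−2, 0), ρ^(A)(t,x) = (x−2)/(2t+1) if x ∈ (0, 2], and 0 otherwise. Fix T > 0. Then there exists no sequence (f_n) of integrable functions f_n:[0,T]×(−∞,0]→ℝ such that ∫_{−∞}^0 f_n(t,y) dy = 3/2 for almost every t ∈ [0,T] for every n, and f_n → ρ^(A) in L¹([0,T]×(−∞,0]) as n → ∞. -/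
open MeasureTheory Set Filter

/-- The explicit entropy admissible solution of Example A. -/
noncomputable def rhoA (t x : ℝ) : ℝ :=
  if t ≤ 1/2 then
    if x ∈ Icc (-2 : ℝ) (2*t - 1) then (x + 2) / (2*t + 1)
    else if x ∈ Ioo (2*t - 1) (0 : ℝ) then 1
    else if x ∈ Ioo (0 : ℝ) (1 - 2*t) then -1
    else if x ∈ Icc (1 - 2*t) (2 : ℝ) then (x - 2) / (2*t + 1)
    else 0
  else
    if x ∈ Ico (-2 : ℝ) 0 then (x + 2) / (2*t + 1)
    else if x ∈ Ioc (0 : ℝ) 2 then (x - 2) / (2*t + 1)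
    else 0

lemma rhoA_measurable : Measurable (Function.uncurry rhoA) := by
  unfold rhoA Function.uncurry
  simp only [mem_Icc, mem_Ioo, mem_Ico, mem_Ioc]
  have m1 : Measurable fun p : ℝ × ℝ => p.1 := measurable_fst
  have m2 : Measurable fun p : ℝ × ℝ => p.2 := measurable_snd
  refine Measurable.ite (measurableSet_le m1 measurable_const) ?_ ?_
  · refine Measurable.ite ((measurableSet_le measurable_const m2).inter
      (measurableSet_le m2 (by fun_prop))) (by fun_prop) ?_
    refine Measurable.ite ((measurableSet_lt (by fun_prop) m2).inter
      (measurableSet_lt m2 measurable_const)) (by fun_prop) ?_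
    refine Measurable.ite ((measurableSet_lt measurable_const m2).inter
      (measurableSet_lt m2 (by fun_prop))) (by fun_prop) ?_
    exact Measurable.ite ((measurableSet_le (by fun_prop) m2).inter
      (measurableSet_le m2 measurable_const)) (by fun_prop) (by fun_prop)
  · refine Measurable.ite ((measurableSet_le measurable_const m2).inter
      (measurableSet_lt m2 measurable_const)) (by fun_prop) ?_
    exact Measurable.ite ((measurableSet_lt measurable_const m2).inter
      (measurableSet_le m2 measurable_const)) (by fun_prop) (by fun_prop)

/-- pointwise bound `|ρ^A| ≤ 1_{[-2,2]}`. -/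
lemma rhoA_abs_le (t y : ℝ) (ht : 0 ≤ t) :
    |rhoA t y| ≤ (Icc (-2:ℝ) 2).indicator (fun _ => 1) y := by
  have h0 : (0:ℝ) < 2*t + 1 := by linarith
  have hind : ∀ z : ℝ, z ∈ Icc (-2:ℝ) 2 →
      (Icc (-2:ℝ) 2).indicator (fun _ => (1:ℝ)) z = 1 := fun z hz => indicator_of_mem hz _
  have hnn : (0:ℝ) ≤ (Icc (-2:ℝ) 2).indicator (fun _ => (1:ℝ)) y :=
    indicator_nonneg (fun _ _ => zero_le_one) y
  unfold rhoA
  split_ifs with h1 h2 h3 h4 h5 h6 h7 <;>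
    simp only [mem_Icc, mem_Ioo, mem_Ico, mem_Ioc] at *
  · rw [hind y ⟨by linarith [h2.1], by linarith [h2.2]⟩, abs_div, abs_of_pos h0,
      abs_of_nonneg (by linarith [h2.1]), div_le_one h0]
    linarith [h2.2]
  · rw [hind y ⟨by linarith [h3.1], by linarith [h3.2]⟩]; simp
  · rw [hind y ⟨by linarith [h4.1], by linarith [h4.2]⟩]; simp
  · rw [hind y ⟨by linarith [h5.1], h5.2⟩, abs_div, abs_of_pos h0,
      abs_of_nonpos (by linarith [h5.2]), div_le_one h0]
    linarith [h5.1]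
  · simpa using hnn
  · rw [hind y ⟨h6.1, by linarith [h6.2]⟩, abs_div, abs_of_pos h0,
      abs_of_nonneg (by linarith [h6.1]), div_le_one h0]
    linarith [h6.2]
  · rw [hind y ⟨by linarith [h7.1], h7.2⟩, abs_div, abs_of_pos h0,
      abs_of_nonpos (by linarith [h7.2]), div_le_one h0]
    linarith [h7.1]
  · simpa using hnn

/-- pointwise upper bound for `ρ^A(t,·)` on the negative half line, uniform in `t ≥ c`. -/
lemma rhoA_le_g (c t y : ℝ) (hc0 : 0 < c) (hc : c < 1/2) (hct : c ≤ t) (hy : y ≤ 0) :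
    rhoA t y ≤ (Icc (-2:ℝ) 0).indicator (fun z => min 1 ((z+2)/(2*c+1))) y := by
  have hc1 : (0:ℝ) < 2*c + 1 := by linarith
  have ht0 : (0:ℝ) < 2*t + 1 := by linarith
  have hindnn : 0 ≤ (Icc (-2:ℝ) 0).indicator (fun z => min 1 ((z+2)/(2*c+1))) y := by
    refine indicator_nonneg (fun z hz => ?_) y
    exact le_min zero_le_one (div_nonneg (by linarith [hz.1]) hc1.le)
  unfold rhoA
  split_ifs with h1 h2 h3 h4 h5 h6 h7 <;>
    simp only [mem_Icc, mem_Ioo, mem_Ico, mem_Ioc] at *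
  · rw [indicator_of_mem (mem_Icc.2 ⟨h2.1, hy⟩)]
    refine le_min ?_ ?_
    · rw [div_le_one ht0]; linarith [h2.2]
    · rw [div_le_div_iff₀ ht0 hc1]; nlinarith [h2.1]
  · rw [indicator_of_mem (mem_Icc.2 ⟨by linarith [h3.1], hy⟩)]
    refine le_min le_rfl ?_
    rw [le_div_iff₀ hc1]; linarith [h3.1]
  · linarith [h4.1]
  · exact le_trans (div_nonpos_of_nonpos_of_nonneg (by linarith) ht0.le) hindnn
  · exact hindnn
  · rw [indicator_of_mem (mem_Icc.2 ⟨h6.1, hy⟩)]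
    refine le_min ?_ ?_
    · rw [div_le_one ht0]; linarith [h6.2]
    · rw [div_le_div_iff₀ ht0 hc1]; nlinarith [h6.1]
  · linarith [h7.1]
  · exact hindnn

lemma g_cont (c : ℝ) : Continuous (fun z : ℝ => min 1 ((z+2)/(2*c+1))) :=
  continuous_const.min ((continuous_id.add continuous_const).div_const _)

lemma g_integrable (c : ℝ) :
    Integrable ((Icc (-2:ℝ) 0).indicator (fun z => min 1 ((z+2)/(2*c+1)))) := by
  rw [integrable_indicator_iff measurableSet_Icc]
  exact (g_cont c).integrableOn_Icc

lemma g_integral (c : ℝ) (hc0 : 0 < c) (hc : c < 1/2) :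
    ∫ y in Iic (0:ℝ), (Icc (-2:ℝ) 0).indicator (fun z => min 1 ((z+2)/(2*c+1))) y
      = 3/2 - c := by
  have hc1 : (0:ℝ) < 2*c + 1 := by linarith
  rw [setIntegral_indicator measurableSet_Icc,
    inter_eq_self_of_subset_right (Icc_subset_Iic_self),
    integral_Icc_eq_integral_Ioc, ← intervalIntegral.integral_of_le (by norm_num : (-2:ℝ) ≤ 0)]
  have hsplit := intervalIntegral.integral_add_adjacent_intervals
    (a := (-2:ℝ)) (b := 2*c-1) (c := 0)
    ((g_cont c).intervalIntegrable (μ := volume) (-2) (2*c-1))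
    ((g_cont c).intervalIntegrable (μ := volume) (2*c-1) 0)
  rw [← hsplit]
  have h1 : ∫ z in (-2:ℝ)..(2*c-1), min 1 ((z+2)/(2*c+1))
      = ∫ z in (-2:ℝ)..(2*c-1), (z+2)/(2*c+1) := by
    refine intervalIntegral.integral_congr (fun z hz => ?_)
    rw [uIcc_of_le (by linarith)] at hz
    exact min_eq_right (by rw [div_le_one hc1]; linarith [hz.2])
  have h2 : ∫ z in (2*c-1)..(0:ℝ), min 1 ((z+2)/(2*c+1)) = ∫ z in (2*c-1)..(0:ℝ), (1:ℝ) := by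
    refine intervalIntegral.integral_congr (fun z hz => ?_)
    rw [uIcc_of_le (by linarith)] at hz
    exact min_eq_left (by rw [le_div_iff₀ hc1]; linarith [hz.1])
  rw [h1, h2]
  have h3 : ∫ z in (-2:ℝ)..(2*c-1), (z+2)/(2*c+1)
      = (∫ z in (-2:ℝ)..(2*c-1), (z+2)) / (2*c+1) := intervalIntegral.integral_div _ _
  rw [h3, intervalIntegral.integral_add (intervalIntegral.intervalIntegrable_id)
    (intervalIntegrable_const),
    integral_id, intervalIntegral.integral_const, intervalIntegral.integral_const]
  simp only [smul_eq_mul]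
  field_simp
  ring

lemma bound_integrable : Integrable ((Icc (-2:ℝ) 2).indicator (fun _ => (1:ℝ))) := by
  rw [integrable_indicator_iff measurableSet_Icc]
  exact integrableOn_const measure_Icc_lt_top.ne

lemma rhoA_integrableOn (t : ℝ) (ht : 0 ≤ t) : IntegrableOn (rhoA t) (Iic (0:ℝ)) := by
  refine Integrable.mono' (bound_integrable.integrableOn)
    ((rhoA_measurable.comp (measurable_const.prodMk measurable_id)).aestronglyMeasurable) ?_
  exact Eventually.of_forall fun y => by simpa using rhoA_abs_le t y ht

lemma rhoA_integrableOn_prod (T : ℝ) :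
    IntegrableOn (Function.uncurry rhoA) (Icc (0:ℝ) T ×ˢ Iic (0:ℝ)) := by
  refine Integrable.mono' (g := fun p : ℝ × ℝ => (Icc (-2:ℝ) 2).indicator (fun _ => (1:ℝ)) p.2)
    ?_ rhoA_measurable.aestronglyMeasurable.restrict ?_
  · -- integrable bound on the product set
    rw [show ((volume : Measure (ℝ × ℝ))) = volume.prod volume from
      Measure.volume_eq_prod ℝ ℝ, ← Measure.prod_restrict]
    haveI : IsFiniteMeasure (volume.restrict (Icc (0:ℝ) T)) :=
      ⟨by rw [Measure.restrict_apply_univ]; exact measure_Icc_lt_top⟩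
    have hm : AEStronglyMeasurable (fun p : ℝ × ℝ => (Icc (-2:ℝ) 2).indicator (fun _ => (1:ℝ)) p.2)
        ((volume.restrict (Icc (0:ℝ) T)).prod (volume.restrict (Iic (0:ℝ)))) :=
      (((measurable_const.indicator measurableSet_Icc)).comp measurable_snd).aestronglyMeasurable
    rw [integrable_prod_iff hm]
    refine ⟨Eventually.of_forall fun t => bound_integrable.restrict, ?_⟩
    simpa using integrable_const (μ := volume.restrict (Icc (0:ℝ) T))
      (∫ y in Iic (0:ℝ), ‖(Icc (-2:ℝ) 2).indicator (fun _ => (1:ℝ)) y‖)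
  · refine (ae_restrict_mem ((measurableSet_Icc).prod measurableSet_Iic)).mono ?_
    rintro ⟨t, y⟩ ⟨ht, _⟩
    simpa using rhoA_abs_le t y ht.1

/-- key mass estimate: for `t ≥ c` the mass of `ρ^A(t,·)` on the negative half line
is at most `3/2 - c`. -/
lemma rhoA_mass_le (c t : ℝ) (hc0 : 0 < c) (hc : c < 1/2) (hct : c ≤ t) :
    ∫ y in Iic (0:ℝ), rhoA t y ≤ 3/2 - c := by
  have := setIntegral_mono_on (rhoA_integrableOn t (by linarith))
    ((g_integrable c).integrableOn) measurableSet_Iic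
    (fun y hy => rhoA_le_g c t y hc0 hc hct hy)
  calc ∫ y in Iic (0:ℝ), rhoA t y
      ≤ ∫ y in Iic (0:ℝ), (Icc (-2:ℝ) 0).indicator (fun z => min 1 ((z+2)/(2*c+1))) y := this
    _ = 3/2 - c := g_integral c hc0 hc

/-- There is no sequence of integrable functions on `[0,T]×(−∞,0]`, each of which has
mass `3/2` on the negative half-line for almost every time `t ∈ [0,T]`, converging to
`ρ^(A)` in `L¹([0,T]×(−∞,0])`. -/
theorem no_mass_conserving_L1_approximation (T : ℝ) (hT : 0 < T) :
    ¬ ∃ f : ℕ → ℝ → ℝ → ℝ,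
      (∀ n, IntegrableOn (Function.uncurry (f n)) (Icc (0:ℝ) T ×ˢ Iic (0:ℝ))) ∧
      (∀ n, ∀ᵐ t ∂(volume.restrict (Icc (0:ℝ) T)),
        (∫ y in Iic (0:ℝ), f n t y) = 3/2) ∧
      Tendsto
        (fun n => ∫ p in Icc (0:ℝ) T ×ˢ Iic (0:ℝ),
          |Function.uncurry (f n) p - Function.uncurry rhoA p|)
        atTop (nhds 0) := by
  rintro ⟨f, hfi, hmass, hconv⟩
  set c : ℝ := min T 1 / 4 with hc_def
  have hmin : 0 < min T 1 := lt_min hT one_pos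
  have hc0 : 0 < c := by positivity
  have hc2 : c < 1/2 := by
    have : min T 1 ≤ 1 := min_le_right _ _
    rw [hc_def]; linarith
  have hcT : c < T := by
    have : min T 1 ≤ T := min_le_left _ _
    rw [hc_def]; linarith
  have hsub : Icc c T ⊆ Icc (0:ℝ) T := Icc_subset_Icc_left hc0.le
  haveI : IsFiniteMeasure (volume.restrict (Icc c T)) :=
    ⟨by rw [Measure.restrict_apply_univ]; exact measure_Icc_lt_top⟩
  have key : ∀ n, c * (T - c) ≤ ∫ p in Icc (0:ℝ) T ×ˢ Iic (0:ℝ),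
      |Function.uncurry (f n) p - Function.uncurry rhoA p| := by
    intro n
    -- integrability facts
    have hρ := rhoA_integrableOn_prod T
    have hdiff : IntegrableOn (fun p => Function.uncurry (f n) p - Function.uncurry rhoA p)
        (Icc (0:ℝ) T ×ˢ Iic (0:ℝ)) := (hfi n).sub hρ
    have habs : IntegrableOn (fun p => |Function.uncurry (f n) p - Function.uncurry rhoA p|)
        (Icc (0:ℝ) T ×ˢ Iic (0:ℝ)) := hdiff.abs
    have habs' : IntegrableOn (fun p => |Function.uncurry (f n) p - Function.uncurry rhoA p|)
        (Icc c T ×ˢ Iic (0:ℝ)) := habs.mono_set (prod_mono_left hsub)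
    -- restrict to the smaller time window
    have step1 : ∫ p in Icc c T ×ˢ Iic (0:ℝ),
          |Function.uncurry (f n) p - Function.uncurry rhoA p|
        ≤ ∫ p in Icc (0:ℝ) T ×ˢ Iic (0:ℝ),
          |Function.uncurry (f n) p - Function.uncurry rhoA p| := by
      refine setIntegral_mono_set habs (Eventually.of_forall fun p => abs_nonneg _) ?_
      exact HasSubset.Subset.eventuallyLE (prod_mono_left hsub)
    -- Fubini on the smaller window
    have hprod_eq : (volume : Measure (ℝ × ℝ)) = volume.prod volume := Measure.volume_eq_prod ℝ ℝ
    have habs'' : IntegrableOn (fun p => |Function.uncurry (f n) p - Function.uncurry rhoA p|)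
        (Icc c T ×ˢ Iic (0:ℝ)) (volume.prod volume) := by rwa [← hprod_eq]
    have step2 : ∫ p in Icc c T ×ˢ Iic (0:ℝ),
          |Function.uncurry (f n) p - Function.uncurry rhoA p|
        = ∫ t in Icc c T, ∫ y in Iic (0:ℝ), |f n t y - rhoA t y| := by
      rw [hprod_eq, setIntegral_prod _ habs'']
      rfl
    -- a.e. lower bound on the inner integral
    have hfin' : Integrable (Function.uncurry (f n))
        ((volume.restrict (Icc (0:ℝ) T)).prod (volume.restrict (Iic (0:ℝ)))) := by
      rw [Measure.prod_restrict, ← hprod_eq]; exact hfi n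
    have hae1 : ∀ᵐ t ∂(volume.restrict (Icc (0:ℝ) T)),
        IntegrableOn (f n t) (Iic (0:ℝ)) := hfin'.prod_right_ae
    have hae1' := ae_restrict_of_ae_restrict_of_subset hsub hae1
    have hae2' := ae_restrict_of_ae_restrict_of_subset hsub (hmass n)
    have hae3 : ∀ᵐ t ∂(volume.restrict (Icc c T)), t ∈ Icc c T :=
      ae_restrict_mem measurableSet_Icc
    have step3 : ∀ᵐ t ∂(volume.restrict (Icc c T)),
        c ≤ ∫ y in Iic (0:ℝ), |f n t y - rhoA t y| := by
      filter_upwards [hae1', hae2', hae3] with t hInt hm htm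
      have hρt := rhoA_integrableOn t (le_trans hc0.le htm.1)
      have h1 : ∫ y in Iic (0:ℝ), (f n t y - rhoA t y)
          = 3/2 - ∫ y in Iic (0:ℝ), rhoA t y := by
        rw [integral_sub hInt hρt, hm]
      have h2 : ∫ y in Iic (0:ℝ), (f n t y - rhoA t y)
          ≤ ∫ y in Iic (0:ℝ), |f n t y - rhoA t y| := by
        refine le_trans (le_abs_self _) ?_
        simpa [Real.norm_eq_abs] using
          norm_integral_le_integral_norm (μ := volume.restrict (Iic (0:ℝ)))
            (fun y => f n t y - rhoA t y)
      have h3 := rhoA_mass_le c t hc0 hc2 htm.1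
      linarith
    -- integrate the constant lower bound
    have hInner : Integrable (fun t => ∫ y in Iic (0:ℝ), |f n t y - rhoA t y|)
        (volume.restrict (Icc c T)) := by
      have := ((by rwa [Measure.prod_restrict, ← hprod_eq] :
        Integrable (fun p => |Function.uncurry (f n) p - Function.uncurry rhoA p|)
          ((volume.restrict (Icc c T)).prod (volume.restrict (Iic (0:ℝ)))))).integral_prod_left
      exact this
    have step4 : ∫ _t in Icc c T, c ≤ ∫ t in Icc c T, ∫ y in Iic (0:ℝ), |f n t y - rhoA t y| :=
      integral_mono_ae (integrable_const c) hInner step3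
    have step5 : ∫ _t in Icc c T, (c:ℝ) = c * (T - c) := by
      rw [setIntegral_const, measureReal_def, Real.volume_Icc, ENNReal.toReal_ofReal (by linarith)]
      ring_nf
    calc c * (T - c) = ∫ _t in Icc c T, (c:ℝ) := step5.symm
      _ ≤ ∫ t in Icc c T, ∫ y in Iic (0:ℝ), |f n t y - rhoA t y| := step4
      _ = ∫ p in Icc c T ×ˢ Iic (0:ℝ),
          |Function.uncurry (f n) p - Function.uncurry rhoA p| := step2.symm
      _ ≤ _ := step1
  have hle : c * (T - c) ≤ 0 := ge_of_tendsto hconv (Eventually.of_forall key)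
  nlinarith
end

section
/- Fix an integer ℓ ≥ 1, real weights γ_k ≥ 0 for k ∈ {−ℓ,…,ℓ−1} with γ_k = 0 whenever k ≥ 0, and λ > 0. Let (ρ_j^n)_{j∈ℤ, n∈ℕ} be generated by the nonlocal Godunov scheme: V_{j+1/2}^n = Σ_{k=−ℓ}^{ℓ−1} γ_k ρ_{j−k+1}^n, F_{j+1/2}^n = V_{j+1/2}^n ρ_j^n if V_{j+1/2}^n ≥ 0 and F_{j+1/2}^n = V_{j+1/2}^n ρ_{j+1}^n otherwise, and ρ_j^{n+1} = ρ_j^n − λ (F_{j+1/2}^n − F_{j−1/2}^n). If ρ_j^0 = 0 for every j ≥ 0, then ρ_j^n = 0 for every j ≥ 0 and every n ≥ 0. That is, the Godunov type scheme with quadrature weights coming from a kernel supported on the negative real line preserves the property that the discrete solution vanishes on the nonnegative indices. -/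
/-- The discrete convolution `V_{j+1/2} = Σ_{k=−ℓ}^{ℓ−1} γ_k ρ_{j−k+1}`. -/
noncomputable def discV (ℓ : ℕ) (γ : ℤ → ℝ) (ρ : ℤ → ℝ) (j : ℤ) : ℝ :=
  ∑ k ∈ Finset.Icc (-(ℓ:ℤ)) ((ℓ:ℤ) - 1), γ k * ρ (j - k + 1)

/-- The nonlocal Godunov numerical flux `F_{j+1/2}`. -/
noncomputable def godFlux (ℓ : ℕ) (γ : ℤ → ℝ) (ρ : ℤ → ℝ) (j : ℤ) : ℝ :=
  if 0 ≤ discV ℓ γ ρ j then discV ℓ γ ρ j * ρ j else discV ℓ γ ρ j * ρ (j + 1)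

/-- The nonlocal Godunov scheme with nonnegative quadrature weights vanishing for
`k ≥ 0` (kernel supported on the negative real line) preserves the property that the
discrete solution vanishes on the nonnegative indices. -/
theorem godunov_preserves_vanishing_on_nonneg_indices (ℓ : ℕ) (hℓ : 1 ≤ ℓ)
    (γ : ℤ → ℝ) (hγ_nonneg : ∀ k ∈ Finset.Icc (-(ℓ:ℤ)) ((ℓ:ℤ) - 1), 0 ≤ γ k)
    (hγ_zero : ∀ k ∈ Finset.Icc (-(ℓ:ℤ)) ((ℓ:ℤ) - 1), 0 ≤ k → γ k = 0)
    (lam : ℝ) (hlam : 0 < lam) (ρ : ℕ → ℤ → ℝ)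
    (hstep : ∀ n : ℕ, ∀ j : ℤ,
      ρ (n + 1) j = ρ n j - lam * (godFlux ℓ γ (ρ n) j - godFlux ℓ γ (ρ n) (j - 1)))
    (hinit : ∀ j : ℤ, 0 ≤ j → ρ 0 j = 0) :
    ∀ n : ℕ, ∀ j : ℤ, 0 ≤ j → ρ n j = 0 := by
  intro n
  induction n with
  | zero => exact hinit
  | succ n ih =>
    have hV : ∀ i : ℤ, -1 ≤ i → discV ℓ γ (ρ n) i = 0 := by
      intro i hi
      unfold discV
      apply Finset.sum_eq_zero
      intro k hk
      rcases le_or_gt 0 k with h | h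
      · rw [hγ_zero k hk h]; ring
      · rw [ih (i - k + 1) (by omega)]; ring
    have hF : ∀ i : ℤ, -1 ≤ i → godFlux ℓ γ (ρ n) i = 0 := by
      intro i hi
      unfold godFlux
      rw [hV i hi]
      simp
    intro j hj
    rw [hstep n j, hF j (by omega), hF (j-1) (by omega), ih j hj]
    ring
end
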